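/- Let G be a simple graph with at least two vertices that is not complete, and let G' be obtained from G by adding one new vertex adjacent to every vertex of G. Then for every integer k ≥ 1, G' has diameter exactly 2, and G admits a proper vertex (k−1)-coloring if and only if G' admits a strong conflict-free vertex-connection k-coloring. -/

import Mathlib

open SimpleGraph

/-- `f` is a strong conflict-free vertex-connection coloring of `G`: any two distinct
vertices are joined by a shortest path on which some color occurs exactly once. -/
def IsSCFVC {V α : Type*} [DecidableEq α] (G : SimpleGraph V) (f : V → α) : Prop :=
  ∀ u v : V, u ≠ v → ∃ p : G.Walk u v, p.length = G.dist u v ∧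
    ∃ c : α, (p.support.map f).count c = 1

/-- The graph obtained from `G` by adding one new vertex (`none`) adjacent to every
vertex of `G`. -/
def cone {V : Type*} (G : SimpleGraph V) : SimpleGraph (Option V) :=
  SimpleGraph.fromRel (fun x y =>
    match x, y with
    | some u, some v => G.Adj u v
    | none, some _ => True
    | _, _ => False)

section helpers
variable {V : Type*} (G : SimpleGraph V)

lemma cone_adj_none_some (v : V) : (cone G).Adj none (some v) := by
  simp [cone, SimpleGraph.fromRel_adj]

lemma cone_adj_some {u v : V} : (cone G).Adj (some u) (some v) ↔ G.Adj u v := by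
  simp only [cone, SimpleGraph.fromRel_adj]
  constructor
  · rintro ⟨h, h1 | h2⟩
    · exact h1
    · exact h2.symm
  · intro h
    exact ⟨by simp [h.ne], Or.inl h⟩

def coneWalk2 (u v : V) : (cone G).Walk (some u) (some v) :=
  SimpleGraph.Walk.cons (cone_adj_none_some G u).symm
    (SimpleGraph.Walk.cons (cone_adj_none_some G v) SimpleGraph.Walk.nil)

lemma coneWalk2_length (u v : V) : (coneWalk2 G u v).length = 2 := by
  simp [coneWalk2]

lemma coneWalk2_support (u v : V) :
    (coneWalk2 G u v).support = [some u, none, some v] := by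
  simp [coneWalk2]

lemma enat_eq_two {n : ℕ∞} (hle : n ≤ 2) (h0 : n ≠ 0) (h1 : n ≠ 1) : n = 2 := by
  lift n to ℕ using (by intro h; rw [h] at hle; exact absurd hle (by simp))
  have : (n : ℕ∞) ≤ (2 : ℕ) := by exact_mod_cast hle
  rw [Nat.cast_le] at this
  have h0' : n ≠ 0 := by exact_mod_cast h0
  have h1' : n ≠ 1 := by exact_mod_cast h1
  have : n = 2 := by omega
  exact_mod_cast this

lemma cone_edist_le_two : ∀ x y : Option V, (cone G).edist x y ≤ 2 := by
  intro x y
  match x, y with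
  | none, none => simp [SimpleGraph.edist_self]
  | none, some v =>
      calc (cone G).edist none (some v) ≤ 1 :=
            le_of_eq (SimpleGraph.edist_eq_one_iff_adj.mpr (cone_adj_none_some G v))
        _ ≤ 2 := by norm_num
  | some u, none =>
      calc (cone G).edist (some u) none ≤ 1 :=
            le_of_eq (SimpleGraph.edist_eq_one_iff_adj.mpr (cone_adj_none_some G u).symm)
        _ ≤ 2 := by norm_num
  | some u, some v =>
      calc (cone G).edist (some u) (some v) ≤ (coneWalk2 G u v).length :=
            SimpleGraph.edist_le _
        _ = 2 := by rw [coneWalk2_length]; rfl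

lemma cone_edist_eq_two {u v : V} (h : u ≠ v) (hna : ¬ G.Adj u v) :
    (cone G).edist (some u) (some v) = 2 := by
  refine enat_eq_two (cone_edist_le_two G _ _) ?_ ?_
  · rw [Ne, SimpleGraph.edist_eq_zero_iff]
    simp [h]
  · rw [Ne, SimpleGraph.edist_eq_one_iff_adj, cone_adj_some]
    exact hna

lemma cone_dist_eq_two {u v : V} (h : u ≠ v) (hna : ¬ G.Adj u v) :
    (cone G).dist (some u) (some v) = 2 := by
  have := cone_edist_eq_two G h hna
  rw [SimpleGraph.dist, this]
  rfl

lemma cone_diam (hnc : ∃ u v : V, u ≠ v ∧ ¬ G.Adj u v) : (cone G).diam = 2 := by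
  obtain ⟨u, v, h, hna⟩ := hnc
  have hediam : (cone G).ediam = 2 := by
    refine le_antisymm (SimpleGraph.ediam_le_of_edist_le (cone_edist_le_two G)) ?_
    rw [← cone_edist_eq_two G h hna]
    exact SimpleGraph.edist_le_ediam
  rw [SimpleGraph.diam, hediam]
  rfl

lemma support_eq_of_length_one {W : Type*} {H : SimpleGraph W} {u v : W}
    (p : H.Walk u v) (h : p.length = 1) : p.support = [u, v] := by
  cases p with
  | nil => simp at h
  | cons h' q =>
    cases q with
    | nil => simp
    | cons h'' r => simp [SimpleGraph.Walk.length_cons] at h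

lemma count_pair {α : Type*} [DecidableEq α] {a b : α} (h : a ≠ b) :
    ([a, b] : List α).count b = 1 := by
  simp [List.count_cons, h]

lemma count_triple {α : Type*} [DecidableEq α] {a b c : α} (h1 : a ≠ b) (h2 : c ≠ b) :
    ([a, b, c] : List α).count b = 1 := by
  simp [List.count_cons, h1, h2]

/-- the edge as a shortest walk between adjacent vertices -/
lemma edge_walk_spec {W : Type*} {H : SimpleGraph W} {u v : W} (h : H.Adj u v) :
    ∃ p : H.Walk u v, p.length = H.dist u v ∧ p.support = [u, v] := by
  refine ⟨SimpleGraph.Walk.cons h SimpleGraph.Walk.nil, ?_, by simp⟩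
  rw [SimpleGraph.dist_eq_one_iff_adj.mpr h]
  simp

end helpers


/-- If `G` has at least two vertices and is not complete, and `G'` is obtained from `G` by
adding a universal vertex, then `G'` has diameter exactly `2`, and for every `k ≥ 1`,
`G` is `(k-1)`-colorable iff `G'` is strongly conflict-free vertex-connection
`k`-colorable. -/
theorem stmt10 {V : Type*} [Fintype V] (G : SimpleGraph V)
    (hcard : 2 ≤ Fintype.card V)
    (hnotcomplete : ∃ u v : V, u ≠ v ∧ ¬ G.Adj u v)
    (k : ℕ) (hk : 1 ≤ k) :
    (cone G).diam = 2 ∧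
    (G.Colorable (k - 1) ↔ ∃ f : Option V → Fin k, IsSCFVC (cone G) f) := by
  refine ⟨cone_diam G hnotcomplete, ?_, ?_⟩
  · rintro ⟨C⟩
    have hV : Nonempty V := Fintype.card_pos_iff.mp (by omega)
    obtain ⟨w⟩ := hV
    have hk2 : 2 ≤ k := by
      by_contra h
      have hk1 : k - 1 = 0 := by omega
      exact (hk1 ▸ C w).elim0
    set a : Fin k := ⟨k - 1, by omega⟩ with ha
    set f : Option V → Fin k := fun x =>
      match x with
      | none => a
      | some v => Fin.castLE (Nat.sub_le k 1) (C v) with hfdef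
    have hfa : ∀ v : V, f (some v) ≠ a := by
      intro v h
      have : ((C v : Fin (k-1)) : ℕ) = k - 1 := congrArg Fin.val h
      have := (C v).isLt
      omega
    refine ⟨f, ?_⟩
    intro x y hxy
    match x, y with
    | none, none => exact absurd rfl hxy
    | none, some v =>
        obtain ⟨p, hl, hs⟩ := edge_walk_spec (cone_adj_none_some G v)
        exact ⟨p, hl, f (some v), by rw [hs]; exact count_pair (hfa v).symm⟩
    | some u, none =>
        obtain ⟨p, hl, hs⟩ := edge_walk_spec (cone_adj_none_some G u).symm
        refine ⟨p, hl, f (some u), ?_⟩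
        rw [hs]
        simp only [List.map_cons, List.map_nil]
        rw [List.count_cons_self]
        simp [List.count_cons, (hfa u).symm, Ne.symm (hfa u)]
        exact fun h => hfa u h.symm
    | some u, some v =>
        have huv : u ≠ v := fun h => hxy (by rw [h])
        by_cases hadj : G.Adj u v
        · obtain ⟨p, hl, hs⟩ := edge_walk_spec ((cone_adj_some G).mpr hadj)
          refine ⟨p, hl, f (some v), ?_⟩
          rw [hs]
          apply count_pair
          intro h
          exact absurd (Fin.castLE_injective _ h) (C.valid hadj)
        · refine ⟨coneWalk2 G u v, ?_, a, ?_⟩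
          · rw [coneWalk2_length, cone_dist_eq_two G huv hadj]
          · rw [coneWalk2_support]
            exact count_triple (hfa u) (hfa v)
  · rintro ⟨f, hf⟩
    have hdiff : ∀ x y : Option V, (cone G).Adj x y → f x ≠ f y := by
      intro x y hadj heq
      obtain ⟨p, hl, c, hc⟩ := hf x y hadj.ne
      rw [SimpleGraph.dist_eq_one_iff_adj.mpr hadj] at hl
      rw [support_eq_of_length_one p hl] at hc
      simp only [List.map_cons, List.map_nil, heq] at hc
      by_cases h : c = f y
      · rw [h] at hc; simp [List.count_cons] at hc
      · simp [List.count_cons, Ne.symm h] at hc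
    set a : Fin k := f none with ha
    let C : G.Coloring {x : Fin k // x ≠ a} :=
      SimpleGraph.Coloring.mk
        (fun v => ⟨f (some v), fun h => hdiff (some v) none (cone_adj_none_some G v).symm h⟩)
        (fun {u v} hadj => by
          simp only [Ne, Subtype.mk.injEq]
          exact hdiff _ _ ((cone_adj_some G).mpr hadj))
    have hcount : Fintype.card {x : Fin k // x ≠ a} = k - 1 := by
      have := Fintype.card_subtype_compl (fun x : Fin k => x = a)
      simp only [Fintype.card_subtype_eq, Fintype.card_fin] at this
      convert this using 2
    exact hcount ▸ C.colorable
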